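/- arXiv:math/0506128 — 2 statements merged into one kernel-verified Lean document; each statement's English description precedes it below -/
import Mathlib

section
/- Let K be a field, let a,b,c,d ∈ K, set q = abcd, and assume 1 − q^j ≠ 0 for all 1 ≤ j ≤ N. Then Ψ_{2N}(a,b,c,d;1) = Σ_{k=0}^{N} [N choose k]_q · (−a;q)_k · (−c;q)_{N−k} · (ab)^{N−k}. -/
open scoped BigOperators

/-- A partition: a weakly decreasing sequence of nonnegative integers (0-indexed:
`parts i` is λ_{i+1}) with finitely many nonzero terms. -/
structure IntPartition where
  parts : ℕ → ℕ
  antitone : Antitone parts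
  fin_support : ∃ N, ∀ n, N ≤ n → parts n = 0

namespace IntPartition

/-- Σ_{i≥1} ⌈λ_{2i-1}/2⌉ (odd-indexed rows, 1-based; ceiling). -/
noncomputable def statA (l : IntPartition) : ℕ := ∑ᶠ i : ℕ, (l.parts (2 * i) + 1) / 2
/-- Σ_{i≥1} ⌊λ_{2i-1}/2⌋. -/
noncomputable def statB (l : IntPartition) : ℕ := ∑ᶠ i : ℕ, l.parts (2 * i) / 2
/-- Σ_{i≥1} ⌈λ_{2i}/2⌉. -/
noncomputable def statC (l : IntPartition) : ℕ := ∑ᶠ i : ℕ, (l.parts (2 * i + 1) + 1) / 2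
/-- Σ_{i≥1} ⌊λ_{2i}/2⌋. -/
noncomputable def statD (l : IntPartition) : ℕ := ∑ᶠ i : ℕ, l.parts (2 * i + 1) / 2

/-- ℓ(λ): the number of nonzero parts. -/
noncomputable def length (l : IntPartition) : ℕ := Set.ncard (Function.support l.parts)

/-- |λ|: the sum of all parts. -/
noncomputable def size (l : IntPartition) : ℕ := ∑ᶠ i : ℕ, l.parts i

/-- A partition is strict if its nonzero parts are pairwise distinct. -/
def Strict (l : IntPartition) : Prop := ∀ i, l.parts (i + 1) ≠ 0 → l.parts (i + 1) < l.parts i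

/-- The Andrews–Stanley four-parameter weight ω(λ). -/
noncomputable def weight {R : Type*} [CommRing R] (a b c d : R) (l : IntPartition) : R :=
  a ^ l.statA * b ^ l.statB * c ^ l.statC * d ^ l.statD

/-- O(λ): the number of odd parts. -/
noncomputable def oddParts (l : IntPartition) : ℕ := Set.ncard {i : ℕ | Odd (l.parts i)}

/-- O(λ'): the number of odd parts of the conjugate partition. -/
noncomputable def conjOddParts (l : IntPartition) : ℕ :=
  Set.ncard {j : ℕ | Odd (Set.ncard {i : ℕ | j + 1 ≤ l.parts i})}

end IntPartition

/-- The q-shifted factorial (x;q)_n. -/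
def poch {R : Type*} [CommRing R] (x q : R) (n : ℕ) : R :=
  ∏ k ∈ Finset.range n, (1 - x * q ^ k)

/-- The infinite q-shifted factorial (x;q)_∞ (as an infinite product of reals). -/
noncomputable def pochInf (x q : ℝ) : ℝ := ∏' k : ℕ, (1 - x * q ^ k)

/-- The basic hypergeometric series ₂φ₁(α,β;γ;q,w). -/
noncomputable def phi21 (α β γ q w : ℝ) : ℝ :=
  ∑' n : ℕ, poch α q n * poch β q n / (poch q q n * poch γ q n) * w ^ n

/-- Absolute convergence of the ₂φ₁ series. -/
def phi21Summable (α β γ q w : ℝ) : Prop :=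
  Summable (fun n : ℕ => poch α q n * poch β q n / (poch q q n * poch γ q n) * w ^ n)

/-- The Gaussian binomial coefficient [N choose k]_q. -/
noncomputable def gauss {K : Type*} [Field K] (q : K) (N k : ℕ) : K :=
  poch q q N / (poch q q k * poch q q (N - k))

/-- Ψ_N(a,b,c,d;z): the generating function of strict partitions with parts ≤ N. -/
noncomputable def Psi {R : Type*} [CommRing R] (a b c d z : R) (N : ℕ) : R :=
  ∑ᶠ μ : {μ : IntPartition // μ.Strict ∧ μ.parts 0 ≤ N},
    IntPartition.weight a b c d μ.1 * z ^ μ.1.length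

namespace PsiAux

/-! ### Part A: list weights and partitions from sorted lists -/

/-- Alternating weight of a list of parts. -/
def wlist {R : Type*} [CommRing R] : R → R → R → R → List ℕ → R
  | _, _, _, _, [] => 1
  | a, b, c, d, p :: l => a ^ ((p + 1) / 2) * b ^ (p / 2) * wlist c d a b l

@[simp] lemma wlist_nil {R : Type*} [CommRing R] (a b c d : R) : wlist a b c d [] = 1 := rfl

@[simp] lemma wlist_cons {R : Type*} [CommRing R] (a b c d : R) (p : ℕ) (l : List ℕ) :
    wlist a b c d (p :: l) = a ^ ((p + 1) / 2) * b ^ (p / 2) * wlist c d a b l := rfl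

/-- Recursive form of Ψ. -/
def GG {R : Type*} [CommRing R] : ℕ → R → R → R → R → R
  | 0, _, _, _, _ => 1
  | M + 1, a, b, c, d => GG M a b c d + a ^ ((M + 2) / 2) * b ^ ((M + 1) / 2) * GG M c d a b

lemma IntPartition.ext' {μ ν : IntPartition} (h : μ.parts = ν.parts) : μ = ν := by
  cases μ; cases ν; simpa using h

lemma antitone_getD {l : List ℕ} (hl : l.Pairwise (· ≥ ·)) :
    Antitone (fun i => l.getD i 0) := by
  intro i j hij
  by_cases hj : j < l.length
  · have hi : i < l.length := lt_of_le_of_lt hij hj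
    simp only [List.getD_eq_getElem _ _ hj, List.getD_eq_getElem _ _ hi]
    rcases eq_or_lt_of_le hij with rfl | hij'
    · exact le_rfl
    · exact hl.rel_get_of_lt (a := ⟨i, hi⟩) (b := ⟨j, hj⟩) hij'
  · simp only [List.getD_eq_default _ _ (le_of_not_gt hj)]
    exact Nat.zero_le _

/-- The partition whose parts are a strictly decreasing list, padded by zeros. -/
def ofList (l : List ℕ) (hl : l.Pairwise (· > ·)) : IntPartition where
  parts i := l.getD i 0
  antitone := antitone_getD (hl.imp le_of_lt)
  fin_support := ⟨l.length, fun n hn => List.getD_eq_default _ _ hn⟩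

@[simp] lemma ofList_parts (l : List ℕ) (hl : l.Pairwise (· > ·)) (i : ℕ) :
    (ofList l hl).parts i = l.getD i 0 := rfl

lemma ofList_strict (l : List ℕ) (hl : l.Pairwise (· > ·)) : (ofList l hl).Strict := by
  intro i hne
  by_cases hlen : i + 1 < l.length
  · have hi : i < l.length := by omega
    simp only [ofList_parts, List.getD_eq_getElem _ _ hlen, List.getD_eq_getElem _ _ hi]
    exact hl.rel_get_of_lt (a := ⟨i, hi⟩) (b := ⟨i + 1, hlen⟩) (by simp)
  · exact absurd (List.getD_eq_default _ _ (le_of_not_gt hlen)) hne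

/-- Convert a `finsum` over ℕ with vanishing tail to a finite sum. -/
lemma finsum_eq_range {f : ℕ → ℕ} {n : ℕ} (hf : ∀ i, n ≤ i → f i = 0) :
    ∑ᶠ i, f i = ∑ i ∈ Finset.range n, f i := by
  apply finsum_eq_sum_of_support_subset
  intro i hi
  simp only [Finset.coe_range, Set.mem_Iio]
  by_contra hni
  exact hi (hf i (le_of_not_gt hni))

lemma statA_ofList (l : List ℕ) (hl : l.Pairwise (· > ·)) :
    (ofList l hl).statA = ∑ i ∈ Finset.range l.length, (l.getD (2 * i) 0 + 1) / 2 := by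
  apply finsum_eq_range
  intro i hi
  have : l.length ≤ 2 * i := by omega
  rw [ofList_parts, List.getD_eq_default _ _ this]

lemma statB_ofList (l : List ℕ) (hl : l.Pairwise (· > ·)) :
    (ofList l hl).statB = ∑ i ∈ Finset.range l.length, l.getD (2 * i) 0 / 2 := by
  apply finsum_eq_range
  intro i hi
  have : l.length ≤ 2 * i := by omega
  rw [ofList_parts, List.getD_eq_default _ _ this]

lemma statC_ofList (l : List ℕ) (hl : l.Pairwise (· > ·)) :
    (ofList l hl).statC = ∑ i ∈ Finset.range l.length, (l.getD (2 * i + 1) 0 + 1) / 2 := by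
  apply finsum_eq_range
  intro i hi
  have : l.length ≤ 2 * i + 1 := by omega
  rw [ofList_parts, List.getD_eq_default _ _ this]

lemma statD_ofList (l : List ℕ) (hl : l.Pairwise (· > ·)) :
    (ofList l hl).statD = ∑ i ∈ Finset.range l.length, l.getD (2 * i + 1) 0 / 2 := by
  apply finsum_eq_range
  intro i hi
  have : l.length ≤ 2 * i + 1 := by omega
  rw [ofList_parts, List.getD_eq_default _ _ this]

lemma statA_cons (p : ℕ) (l : List ℕ) (hpl : (p :: l).Pairwise (· > ·)) (hl : l.Pairwise (· > ·)) :
    (ofList (p :: l) hpl).statA = (p + 1) / 2 + (ofList l hl).statC := by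
  rw [statA_ofList, statC_ofList, List.length_cons, Finset.sum_range_succ']
  have h1 : ∀ i : ℕ, (p :: l).getD (2 * (i + 1)) 0 = l.getD (2 * i + 1) 0 := by
    intro i
    rw [show 2 * (i + 1) = (2 * i + 1) + 1 by ring]
    rfl
  simp only [h1, mul_zero, List.getD_cons_zero, add_comm]

lemma statB_cons (p : ℕ) (l : List ℕ) (hpl : (p :: l).Pairwise (· > ·)) (hl : l.Pairwise (· > ·)) :
    (ofList (p :: l) hpl).statB = p / 2 + (ofList l hl).statD := by
  rw [statB_ofList, statD_ofList, List.length_cons, Finset.sum_range_succ']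
  have h1 : ∀ i : ℕ, (p :: l).getD (2 * (i + 1)) 0 = l.getD (2 * i + 1) 0 := by
    intro i
    rw [show 2 * (i + 1) = (2 * i + 1) + 1 by ring]
    rfl
  simp only [h1, mul_zero, List.getD_cons_zero, add_comm]

lemma statC_cons (p : ℕ) (l : List ℕ) (hpl : (p :: l).Pairwise (· > ·)) (hl : l.Pairwise (· > ·)) :
    (ofList (p :: l) hpl).statC = (ofList l hl).statA := by
  rw [statC_ofList, statA_ofList, List.length_cons, Finset.sum_range_succ]
  have h1 : ∀ i : ℕ, (p :: l).getD (2 * i + 1) 0 = l.getD (2 * i) 0 := fun i => rfl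
  have h2 : l.getD (2 * l.length) 0 = 0 := List.getD_eq_default _ _ (by omega)
  simp only [h1, h2]
  norm_num

lemma statD_cons (p : ℕ) (l : List ℕ) (hpl : (p :: l).Pairwise (· > ·)) (hl : l.Pairwise (· > ·)) :
    (ofList (p :: l) hpl).statD = (ofList l hl).statB := by
  rw [statD_ofList, statB_ofList, List.length_cons, Finset.sum_range_succ]
  have h1 : ∀ i : ℕ, (p :: l).getD (2 * i + 1) 0 = l.getD (2 * i) 0 := fun i => rfl
  have h2 : l.getD (2 * l.length) 0 = 0 := List.getD_eq_default _ _ (by omega)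
  simp only [h1, h2]
  norm_num

lemma weight_ofList {R : Type*} [CommRing R] :
    ∀ (l : List ℕ) (hl : l.Pairwise (· > ·)) (a b c d : R),
      IntPartition.weight a b c d (ofList l hl) = wlist a b c d l := by
  intro l
  induction l with
  | nil =>
    intro hl a b c d
    have h0 : (ofList [] hl).statA = 0 := by rw [statA_ofList]; simp
    have h1 : (ofList [] hl).statB = 0 := by rw [statB_ofList]; simp
    have h2 : (ofList [] hl).statC = 0 := by rw [statC_ofList]; simp
    have h3 : (ofList [] hl).statD = 0 := by rw [statD_ofList]; simp
    simp [IntPartition.weight, h0, h1, h2, h3]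
  | cons p l ih =>
    intro hpl a b c d
    have hl : l.Pairwise (· > ·) := hpl.of_cons
    rw [wlist_cons, ← ih hl c d a b]
    simp only [IntPartition.weight, statA_cons p l hpl hl, statB_cons p l hpl hl,
      statC_cons p l hpl hl, statD_cons p l hpl hl, pow_add]
    ring

/-! ### From subsets to partitions -/

/-- Strictly decreasing list of the elements of `S`. -/
def dl (S : Finset ℕ) : List ℕ := S.sort (· ≥ ·)

lemma dl_sorted (S : Finset ℕ) : (dl S).Pairwise (· > ·) := List.sortedGT_iff_pairwise.mp (Finset.sortedGT_sort S)

lemma mem_dl {S : Finset ℕ} {x : ℕ} : x ∈ dl S ↔ x ∈ S := Finset.mem_sort _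

/-- The strict partition associated to a finite set of positive integers. -/
def part (S : Finset ℕ) : IntPartition := ofList (dl S) (dl_sorted S)

lemma part_strict (S : Finset ℕ) : (part S).Strict := ofList_strict _ _

lemma part_le {S : Finset ℕ} {M : ℕ} (hS : S ⊆ Finset.Icc 1 M) : (part S).parts 0 ≤ M := by
  by_cases h : 0 < (dl S).length
  · have : (dl S).getD 0 0 = (dl S)[0] := List.getD_eq_getElem _ _ h
    have hmem : (dl S)[0] ∈ dl S := List.getElem_mem _
    have := hS (mem_dl.mp hmem)
    simp only [Finset.mem_Icc] at this
    show (dl S).getD 0 0 ≤ M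
    omega
  · show (dl S).getD 0 0 ≤ M
    rw [List.getD_eq_default _ _ (by omega)]
    exact Nat.zero_le _

lemma mem_part {S : Finset ℕ} (h0 : 0 ∉ S) (x : ℕ) :
    x ∈ S ↔ x ≠ 0 ∧ ∃ i, (part S).parts i = x := by
  constructor
  · intro hx
    have hxl : x ∈ dl S := mem_dl.mpr hx
    obtain ⟨i, hi, hgi⟩ := List.mem_iff_getElem.mp hxl
    refine ⟨fun h => h0 (h ▸ hx), i, ?_⟩
    show (dl S).getD i 0 = x
    rw [List.getD_eq_getElem _ _ hi, hgi]
  · rintro ⟨hx0, i, hi⟩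
    have hlen : i < (dl S).length := by
      by_contra hcon
      rw [show (part S).parts i = (dl S).getD i 0 from rfl,
        List.getD_eq_default _ _ (le_of_not_gt hcon)] at hi
      exact hx0 hi.symm
    have : (dl S).getD i 0 = (dl S)[i] := List.getD_eq_getElem _ _ hlen
    have hmem : (dl S)[i] ∈ dl S := List.getElem_mem _
    rw [show (part S).parts i = (dl S).getD i 0 from rfl, this] at hi
    exact mem_dl.mp (hi ▸ hmem)

lemma zero_not_mem {S : Finset ℕ} {M : ℕ} (hS : S ⊆ Finset.Icc 1 M) : 0 ∉ S := by
  intro h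
  have := hS h
  simp at this

/-- The sum over subsets giving Ψ. -/
lemma psi_eq_sum {R : Type*} [CommRing R] (a b c d : R) (M : ℕ) :
    Psi a b c d 1 M = ∑ S ∈ (Finset.Icc 1 M).powerset, wlist a b c d (dl S) := by
  unfold Psi
  have key : ∑ᶠ (x : {S : Finset ℕ // S ∈ (Finset.Icc 1 M).powerset}), wlist a b c d (dl x.1) =
      ∑ᶠ μ : {μ : IntPartition // μ.Strict ∧ μ.parts 0 ≤ M},
        IntPartition.weight a b c d μ.1 * 1 ^ μ.1.length := by
    apply finsum_eq_of_bijective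
      (fun x : {S : Finset ℕ // S ∈ (Finset.Icc 1 M).powerset} =>
        (⟨part x.1, part_strict x.1, part_le (Finset.mem_powerset.mp x.2)⟩ :
          {μ : IntPartition // μ.Strict ∧ μ.parts 0 ≤ M}))
    · constructor
      · rintro ⟨S, hS⟩ ⟨T, hT⟩ hST
        have hS' := Finset.mem_powerset.mp hS
        have hT' := Finset.mem_powerset.mp hT
        have hval : part S = part T := congrArg Subtype.val hST
        have hparts : (part S).parts = (part T).parts := congrArg IntPartition.parts hval
        apply Subtype.ext
        simp only
        ext x
        rw [mem_part (zero_not_mem hS') x, mem_part (zero_not_mem hT') x, hparts]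
      · rintro ⟨μ, hstrict, hle⟩
        obtain ⟨B, hB⟩ := μ.fin_support
        have hzero : ∃ n, μ.parts n = 0 := ⟨B, hB B le_rfl⟩
        set k := Nat.find hzero with hk_def
        have hk : μ.parts k = 0 := Nat.find_spec hzero
        have hmin : ∀ i, i < k → μ.parts i ≠ 0 := fun i hi => Nat.find_min hzero hi
        have hbig : ∀ i, k ≤ i → μ.parts i = 0 := fun i hi =>
          Nat.le_zero.mp (hk ▸ μ.antitone hi)
        have hdec : ∀ i j, i < j → j < k → μ.parts j < μ.parts i := by
          intro i j hij hjk
          have hj0 : μ.parts j ≠ 0 := hmin j hjk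
          obtain ⟨j', rfl⟩ : ∃ j', j = j' + 1 := ⟨j - 1, by omega⟩
          exact lt_of_lt_of_le (hstrict j' hj0) (μ.antitone (by omega))
        set L := (List.range k).map μ.parts with hL_def
        have hLlen : L.length = k := by simp [hL_def]
        have hLget : ∀ (i : ℕ) (hi : i < L.length), L[i] = μ.parts i := by
          intro i hi
          simp [hL_def]
        have hL : L.Pairwise (· > ·) := by
          rw [List.pairwise_iff_getElem]
          intro i j hi hj hij
          rw [hLget i hi, hLget j hj]
          exact hdec i j hij (hLlen ▸ hj)
        have hnd : L.Nodup := hL.imp (fun h => ne_of_gt h)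
        have hdlS : dl L.toFinset = L :=
          (List.toFinset_sort _ hnd).mpr (hL.imp le_of_lt)
        have hparts : ∀ i, (part L.toFinset).parts i = μ.parts i := by
          intro i
          show (dl L.toFinset).getD i 0 = μ.parts i
          rw [hdlS]
          by_cases hi : i < L.length
          · rw [List.getD_eq_getElem _ _ hi, hLget i hi]
          · rw [List.getD_eq_default _ _ (le_of_not_gt hi),
              hbig i (by omega)]
        have hsub : L.toFinset ⊆ Finset.Icc 1 M := by
          intro x hx
          rw [List.mem_toFinset, hL_def, List.mem_map] at hx
          obtain ⟨i, hi, rfl⟩ := hx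
          rw [List.mem_range] at hi
          simp only [Finset.mem_Icc]
          constructor
          · exact Nat.one_le_iff_ne_zero.mpr (hmin i hi)
          · exact le_trans (μ.antitone (Nat.zero_le i)) hle
        refine ⟨⟨L.toFinset, Finset.mem_powerset.mpr hsub⟩, ?_⟩
        apply Subtype.ext
        simp only
        exact IntPartition.ext' (funext hparts)
    · rintro ⟨S, hS⟩
      simp only [one_pow, mul_one]
      exact (weight_ofList (dl S) (dl_sorted S) a b c d).symm
  rw [← key]
  have hcoe : ∑ᶠ (x : {S : Finset ℕ // S ∈ (Finset.Icc 1 M).powerset}), wlist a b c d (dl x.1) =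
      ∑ᶠ (x : ((Finset.Icc 1 M).powerset : Set (Finset ℕ))), wlist a b c d (dl x.1) := rfl
  rw [hcoe]
  calc ∑ᶠ (x : ((Finset.Icc 1 M).powerset : Set (Finset ℕ))), wlist a b c d (dl x.1)
      = ∑ᶠ S ∈ ((Finset.Icc 1 M).powerset : Set (Finset ℕ)), wlist a b c d (dl S) :=
        finsum_set_coe_eq_finsum_mem (f := fun S => wlist a b c d (dl S)) _
    _ = _ := finsum_mem_coe_finset _ _

/-- Recursion for the subset sum. -/
lemma sum_pow_succ {R : Type*} [CommRing R] (a b c d : R) (M : ℕ) :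
    ∑ S ∈ (Finset.Icc 1 (M + 1)).powerset, wlist a b c d (dl S) =
      (∑ S ∈ (Finset.Icc 1 M).powerset, wlist a b c d (dl S)) +
        a ^ ((M + 2) / 2) * b ^ ((M + 1) / 2) *
          ∑ S ∈ (Finset.Icc 1 M).powerset, wlist c d a b (dl S) := by
  rw [← Finset.insert_Icc_right_eq_Icc_add_one (show 1 ≤ M + 1 by omega), Finset.powerset_insert]
  have hdisj : Disjoint (Finset.Icc 1 M).powerset
      ((Finset.Icc 1 M).powerset.image (insert (M + 1))) := by
    rw [Finset.disjoint_left]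
    intro S hS1 hS2
    rw [Finset.mem_image] at hS2
    obtain ⟨T, _, rfl⟩ := hS2
    have : M + 1 ∈ Finset.Icc 1 M := Finset.mem_powerset.mp hS1 (Finset.mem_insert_self _ _)
    simp at this
  rw [Finset.sum_union hdisj]
  congr 1
  have hnotmem : ∀ S ∈ (Finset.Icc 1 M).powerset, M + 1 ∉ S := by
    intro S hS hmem
    have := Finset.mem_powerset.mp hS hmem
    simp at this
  rw [Finset.sum_image (by
    intro x hx y hy hxy
    have : (insert (M + 1) x).erase (M + 1) = (insert (M + 1) y).erase (M + 1) := by rw [hxy]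
    rwa [Finset.erase_insert (hnotmem x hx), Finset.erase_insert (hnotmem y hy)] at this)]
  rw [Finset.mul_sum]
  apply Finset.sum_congr rfl
  intro S hS
  have hdlins : dl (insert (M + 1) S) = (M + 1) :: dl S := by
    apply Finset.sort_insert
    · intro x hx
      have := Finset.mem_powerset.mp hS hx
      simp only [Finset.mem_Icc] at this
      omega
    · exact hnotmem S hS
  rw [hdlins, wlist_cons]

lemma psi_eq_GG {R : Type*} [CommRing R] :
    ∀ (M : ℕ) (a b c d : R), Psi a b c d 1 M = GG M a b c d := by
  intro M
  induction M with
  | zero =>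
    intro a b c d
    rw [psi_eq_sum]
    have : Finset.Icc 1 0 = (∅ : Finset ℕ) := by simp
    rw [this]
    simp [GG, dl, wlist]
  | succ M ih =>
    intro a b c d
    rw [psi_eq_sum, sum_pow_succ, ← psi_eq_sum a b c d M, ← psi_eq_sum c d a b M,
      ih a b c d, ih c d a b]
    rfl

/-! ### Part B: the q-series side -/

variable {K : Type*} [Field K]

@[simp] lemma poch_zero (x q : K) : poch x q 0 = 1 := rfl

lemma poch_succ (x q : K) (n : ℕ) : poch x q (n + 1) = poch x q n * (1 - x * q ^ n) :=
  Finset.prod_range_succ _ n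

/-- The sum `S_N`. -/
noncomputable def Sf (q a b c d : K) (N : ℕ) : K :=
  ∑ k ∈ Finset.range (N + 1),
    gauss q N k * poch (-a) q k * poch (-c) q (N - k) * (a * b) ^ (N - k)

/-- The intermediate sum `T_N` (equal to `Ψ_{2N+1}`). -/
noncomputable def Tf (q a b c d : K) (N : ℕ) : K :=
  ∑ k ∈ Finset.range (N + 1),
    gauss q N k * poch (-a) q (k + 1) * poch (-c) q (N - k) * (a * b) ^ (N - k)

lemma gauss_symm (q : K) {N k : ℕ} (hk : k ≤ N) : gauss q N (N - k) = gauss q N k := by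
  unfold gauss
  rw [Nat.sub_sub_self hk, mul_comm]

lemma gauss_zero (q : K) (N : ℕ) (hN : poch q q N ≠ 0) : gauss q N 0 = 1 := by
  unfold gauss
  rw [Nat.sub_zero, poch_zero, one_mul, div_self hN]

lemma gauss_self (q : K) (N : ℕ) (hN : poch q q N ≠ 0) : gauss q N N = 1 := by
  unfold gauss
  rw [Nat.sub_self, poch_zero, mul_one, div_self hN]

lemma gauss_pascal (q : K) (N k : ℕ) (hk : k + 1 ≤ N)
    (hP : ∀ j, j ≤ N + 1 → poch q q j ≠ 0) :
    gauss q (N + 1) (k + 1) = gauss q N k + q ^ (k + 1) * gauss q N (k + 1) := by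
  obtain ⟨m, rfl⟩ : ∃ m, N = k + 1 + m := ⟨N - (k + 1), by omega⟩
  unfold gauss
  rw [show k + 1 + m + 1 - (k + 1) = m + 1 by omega, show k + 1 + m - k = m + 1 by omega,
    show k + 1 + m - (k + 1) = m by omega]
  have hk1 : poch q q (k + 1) = poch q q k * (1 - q * q ^ k) := poch_succ q q k
  have hm1 : poch q q (m + 1) = poch q q m * (1 - q * q ^ m) := poch_succ q q m
  have hN1 : poch q q (k + 1 + m + 1) = poch q q (k + 1 + m) * (1 - q * q ^ (k + 1 + m)) :=
    poch_succ q q (k + 1 + m)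
  have h1 : poch q q k ≠ 0 := hP k (by omega)
  have h2 : poch q q m ≠ 0 := hP m (by omega)
  have h3 : (1 - q * q ^ k) ≠ 0 := by
    have := hP (k + 1) (by omega); rw [hk1] at this
    exact fun hc => this (by rw [hc, mul_zero])
  have h4 : (1 - q * q ^ m) ≠ 0 := by
    have := hP (m + 1) (by omega); rw [hm1] at this
    exact fun hc => this (by rw [hc, mul_zero])
  have h5 : poch q q (k + 1 + m) ≠ 0 := hP _ (by omega)
  rw [hN1, hk1, hm1]
  field_simp
  ring_nf

lemma Tf_eq (q a b c d : K) (N : ℕ) (hq : q = a * b * c * d) :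
    Tf q a b c d N = Sf q a b c d N + a ^ (N + 1) * b ^ N * Sf q c d a b N := by
  have hrefl : Sf q c d a b N = ∑ k ∈ Finset.range (N + 1),
      gauss q N k * poch (-c) q (N - k) * poch (-a) q k * (c * d) ^ k := by
    unfold Sf
    rw [← Finset.sum_range_reflect]
    apply Finset.sum_congr rfl
    intro k hk
    rw [Finset.mem_range] at hk
    have hk' : k ≤ N := by omega
    rw [show N + 1 - 1 - k = N - k by omega, Nat.sub_sub_self hk', gauss_symm q hk']
  rw [hrefl]
  unfold Tf Sf
  rw [Finset.mul_sum, ← Finset.sum_add_distrib]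
  apply Finset.sum_congr rfl
  intro k hk
  rw [Finset.mem_range] at hk
  obtain ⟨m, rfl⟩ : ∃ m, N = m + k := ⟨N - k, by omega⟩
  rw [poch_succ, show m + k - k = m by omega]
  subst hq
  ring

lemma Sf_succ (q a b c d : K) (N : ℕ) (hq : q = a * b * c * d)
    (hP : ∀ j, j ≤ N + 1 → poch q q j ≠ 0) :
    Sf q a b c d (N + 1) = Tf q a b c d N + (a * b) ^ (N + 1) * Tf q c d a b N := by
  set f : ℕ → K := fun k =>
    gauss q (N + 1) k * poch (-a) q k * poch (-c) q (N + 1 - k) * (a * b) ^ (N + 1 - k) with hf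
  set t : ℕ → K := fun k =>
    gauss q N k * poch (-a) q (k + 1) * poch (-c) q (N - k) * (a * b) ^ (N - k) with ht
  set v : ℕ → K := fun k =>
    q ^ k * gauss q N k * poch (-a) q k * poch (-c) q (N + 1 - k) * (a * b) ^ (N + 1 - k) with hv
  have hfv0 : f 0 = v 0 := by
    simp only [hf, hv, pow_zero, one_mul]
    rw [gauss_zero q (N + 1) (hP _ le_rfl), gauss_zero q N (hP _ (by omega))]
  have hft : f (N + 1) = t N := by
    simp only [hf, ht]
    rw [gauss_self q (N + 1) (hP _ le_rfl), gauss_self q N (hP _ (by omega)),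
      Nat.sub_self, Nat.sub_self]
  have hfu : ∀ k, k < N → f (k + 1) = t k + v (k + 1) := by
    intro k hkN
    simp only [hf, ht, hv]
    rw [gauss_pascal q N k (by omega) hP,
      show N + 1 - (k + 1) = N - k by omega]
    ring
  have step1 : Sf q a b c d (N + 1) =
      (∑ k ∈ Finset.range (N + 1), t k) + (∑ k ∈ Finset.range (N + 1), v k) := by
    unfold Sf
    rw [show N + 1 + 1 = N + 2 by omega]
    calc ∑ k ∈ Finset.range (N + 2), f k
        = (∑ k ∈ Finset.range (N + 1), f (k + 1)) + f 0 := Finset.sum_range_succ' f (N + 1)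
      _ = ((∑ k ∈ Finset.range N, f (k + 1)) + f (N + 1)) + f 0 := by
          rw [Finset.sum_range_succ]
      _ = ((∑ k ∈ Finset.range N, (t k + v (k + 1))) + t N) + v 0 := by
          rw [hft, hfv0]
          congr 2
          exact Finset.sum_congr rfl fun k hk => hfu k (Finset.mem_range.mp hk)
      _ = ((∑ k ∈ Finset.range N, t k) + t N) +
            ((∑ k ∈ Finset.range N, v (k + 1)) + v 0) := by
          rw [Finset.sum_add_distrib]; ring
      _ = _ := by rw [← Finset.sum_range_succ, ← Finset.sum_range_succ']
  have step2 : ∑ k ∈ Finset.range (N + 1), v k = (a * b) ^ (N + 1) * Tf q c d a b N := by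
    have hrefl : Tf q c d a b N = ∑ k ∈ Finset.range (N + 1),
        gauss q N k * poch (-c) q (N - k + 1) * poch (-a) q k * (c * d) ^ k := by
      unfold Tf
      rw [← Finset.sum_range_reflect]
      apply Finset.sum_congr rfl
      intro k hk
      rw [Finset.mem_range] at hk
      have hk' : k ≤ N := by omega
      rw [show N + 1 - 1 - k = N - k by omega, Nat.sub_sub_self hk', gauss_symm q hk']
    rw [hrefl, Finset.mul_sum]
    apply Finset.sum_congr rfl
    intro k hk
    rw [Finset.mem_range] at hk
    simp only [hv]
    obtain ⟨m, rfl⟩ : ∃ m, N = m + k := ⟨N - k, by omega⟩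
    rw [show m + k + 1 - k = m + 1 by omega, show m + k - k = m by omega]
    subst hq
    ring
  rw [step1, step2]
  rfl

lemma poch_q_ne {q : K} {N : ℕ} (h : ∀ j, 1 ≤ j → j ≤ N → (1 : K) - q ^ j ≠ 0) :
    ∀ j, j ≤ N → poch q q j ≠ 0 := by
  intro j hj
  unfold poch
  rw [Finset.prod_ne_zero_iff]
  intro i hi
  rw [Finset.mem_range] at hi
  have : q * q ^ i = q ^ (i + 1) := (pow_succ' q i).symm
  rw [this]
  exact h (i + 1) (by omega) (by omega)

lemma GG_eq_Sf : ∀ (N : ℕ) (a b c d : K),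
    (∀ j, 1 ≤ j → j ≤ N → (1 : K) - (a * b * c * d) ^ j ≠ 0) →
    GG (2 * N) a b c d = Sf (a * b * c * d) a b c d N := by
  intro N
  induction N with
  | zero =>
    intro a b c d _
    show (1 : K) = Sf (a * b * c * d) a b c d 0
    unfold Sf
    simp [gauss, poch]
  | succ N ih =>
    intro a b c d h
    set q : K := a * b * c * d with hq
    have hswap : c * d * a * b = q := by rw [hq]; ring
    have hN : ∀ j, 1 ≤ j → j ≤ N → (1 : K) - q ^ j ≠ 0 := fun j h1 h2 => h j h1 (by omega)
    have hNs : ∀ j, 1 ≤ j → j ≤ N → (1 : K) - (c * d * a * b) ^ j ≠ 0 := by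
      intro j h1 h2; rw [hswap]; exact hN j h1 h2
    have e1 : GG (2 * (N + 1)) a b c d =
        GG (2 * N + 1) a b c d + a ^ (N + 1) * b ^ (N + 1) * GG (2 * N + 1) c d a b := by
      rw [show 2 * (N + 1) = (2 * N + 1) + 1 by ring]
      show GG (2 * N + 1) a b c d + a ^ ((2 * N + 1 + 2) / 2) * b ^ ((2 * N + 1 + 1) / 2) *
          GG (2 * N + 1) c d a b = _
      rw [show (2 * N + 1 + 2) / 2 = N + 1 by omega, show (2 * N + 1 + 1) / 2 = N + 1 by omega]
    have e2 : ∀ x y z w : K, GG (2 * N + 1) x y z w =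
        GG (2 * N) x y z w + x ^ (N + 1) * y ^ N * GG (2 * N) z w x y := by
      intro x y z w
      show GG (2 * N) x y z w + x ^ ((2 * N + 2) / 2) * y ^ ((2 * N + 1) / 2) *
          GG (2 * N) z w x y = _
      rw [show (2 * N + 2) / 2 = N + 1 by omega, show (2 * N + 1) / 2 = N by omega]
    have hGcd : GG (2 * N) c d a b = Sf q c d a b N := by
      rw [ih c d a b hNs, hswap]
    have hGab : GG (2 * N) a b c d = Sf q a b c d N := ih a b c d hN
    have hT1 : GG (2 * N + 1) a b c d = Tf q a b c d N := by
      rw [e2, hGab, hGcd, Tf_eq q a b c d N hq]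
    have hT2 : GG (2 * N + 1) c d a b = Tf q c d a b N := by
      rw [e2, hGcd, hGab, Tf_eq q c d a b N hswap.symm]
    rw [e1, hT1, hT2, ← mul_pow,
      ← Sf_succ q a b c d N hq (poch_q_ne (by intro j h1 h2; exact h j h1 (by omega)))]

end PsiAux


theorem psi_even_gauss {K : Type*} [Field K] (a b c d q : K) (N : ℕ)
    (hq : q = a * b * c * d) (h : ∀ j, 1 ≤ j → j ≤ N → (1 : K) - q ^ j ≠ 0) :
    Psi a b c d 1 (2 * N) =
      ∑ k ∈ Finset.range (N + 1),
        gauss q N k * poch (-a) q k * poch (-c) q (N - k) * (a * b) ^ (N - k) := by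
  subst hq
  rw [PsiAux.psi_eq_GG (2 * N) a b c d, PsiAux.GG_eq_Sf N a b c d h]
  rfl
end

section
/- Let K be a field, let a,b,c,d ∈ K, set q = abcd, and assume 1 − q^j ≠ 0 for all 1 ≤ j ≤ N. Then Ψ_{2N+1}(a,b,c,d;1) = Σ_{k=0}^{N} [N choose k]_q · (−a;q)_{k+1} · (−c;q)_{N−k} · (ab)^{N−k}. -/
open scoped BigOperators

namespace IntPartition

lemma ext' {μ ν : IntPartition} (h : μ.parts = ν.parts) : μ = ν := by
  cases μ; cases ν; cases h; rfl

def tail (μ : IntPartition) : IntPartition where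
  parts n := μ.parts (n + 1)
  antitone := fun _ _ hmn => μ.antitone (Nat.succ_le_succ hmn)
  fin_support := by
    obtain ⟨N, hN⟩ := μ.fin_support
    exact ⟨N, fun n hn => hN _ (by omega)⟩

def cons (x : ℕ) (ν : IntPartition) (hx : ν.parts 0 ≤ x) : IntPartition where
  parts n := match n with
    | 0 => x
    | m + 1 => ν.parts m
  antitone := antitone_nat_of_succ_le (fun n => by
    cases n with
    | zero => exact hx
    | succ m => exact ν.antitone (Nat.le_succ m))
  fin_support := by
    obtain ⟨N, hN⟩ := ν.fin_support
    refine ⟨N + 1, fun n hn => ?_⟩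
    match n, hn with
    | m + 1, hn => exact hN m (by omega)

lemma statA_eq (μ : IntPartition) {B : ℕ} (hB : ∀ n, B ≤ n → μ.parts n = 0) :
    μ.statA = ∑ i ∈ Finset.range B, (μ.parts (2 * i) + 1) / 2 := by
  apply finsum_eq_finset_sum_of_support_subset
  intro i hi
  simp only [Function.mem_support] at hi
  simp only [Finset.coe_range, Set.mem_Iio]
  by_contra hib
  exact hi (by rw [hB (2 * i) (by omega)]; rfl)

lemma statB_eq (μ : IntPartition) {B : ℕ} (hB : ∀ n, B ≤ n → μ.parts n = 0) :
    μ.statB = ∑ i ∈ Finset.range B, μ.parts (2 * i) / 2 := by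
  apply finsum_eq_finset_sum_of_support_subset
  intro i hi
  simp only [Function.mem_support] at hi
  simp only [Finset.coe_range, Set.mem_Iio]
  by_contra hib
  exact hi (by rw [hB (2 * i) (by omega)]; rfl)

lemma statC_eq (μ : IntPartition) {B : ℕ} (hB : ∀ n, B ≤ n → μ.parts n = 0) :
    μ.statC = ∑ i ∈ Finset.range B, (μ.parts (2 * i + 1) + 1) / 2 := by
  apply finsum_eq_finset_sum_of_support_subset
  intro i hi
  simp only [Function.mem_support] at hi
  simp only [Finset.coe_range, Set.mem_Iio]
  by_contra hib
  exact hi (by rw [hB (2 * i + 1) (by omega)]; rfl)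

lemma statD_eq (μ : IntPartition) {B : ℕ} (hB : ∀ n, B ≤ n → μ.parts n = 0) :
    μ.statD = ∑ i ∈ Finset.range B, μ.parts (2 * i + 1) / 2 := by
  apply finsum_eq_finset_sum_of_support_subset
  intro i hi
  simp only [Function.mem_support] at hi
  simp only [Finset.coe_range, Set.mem_Iio]
  by_contra hib
  exact hi (by rw [hB (2 * i + 1) (by omega)]; rfl)

lemma cons_bound {x : ℕ} {ν : IntPartition} (hx : ν.parts 0 ≤ x) {B : ℕ}
    (hB : ∀ n, B ≤ n → ν.parts n = 0) :
    ∀ n, B + 1 ≤ n → (cons x ν hx).parts n = 0 := by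
  intro n hn
  match n, hn with
  | m + 1, hn => exact hB m (by omega)

lemma statA_cons {x : ℕ} {ν : IntPartition} (hx : ν.parts 0 ≤ x) :
    (cons x ν hx).statA = (x + 1) / 2 + ν.statC := by
  obtain ⟨B, hB⟩ := ν.fin_support
  rw [statA_eq _ (cons_bound hx hB), statC_eq _ hB, Finset.sum_range_succ']
  have h1 : ∀ i : ℕ, (cons x ν hx).parts (2 * (i + 1)) = ν.parts (2 * i + 1) := by
    intro i
    have : 2 * (i + 1) = (2 * i + 1) + 1 := by ring
    rw [this]
    rfl
  simp only [h1]
  have h0 : (cons x ν hx).parts (2 * 0) = x := rfl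
  rw [h0, add_comm]

lemma statB_cons {x : ℕ} {ν : IntPartition} (hx : ν.parts 0 ≤ x) :
    (cons x ν hx).statB = x / 2 + ν.statD := by
  obtain ⟨B, hB⟩ := ν.fin_support
  rw [statB_eq _ (cons_bound hx hB), statD_eq _ hB, Finset.sum_range_succ']
  have h1 : ∀ i : ℕ, (cons x ν hx).parts (2 * (i + 1)) = ν.parts (2 * i + 1) := by
    intro i
    have : 2 * (i + 1) = (2 * i + 1) + 1 := by ring
    rw [this]
    rfl
  simp only [h1]
  have h0 : (cons x ν hx).parts (2 * 0) = x := rfl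
  rw [h0, add_comm]

lemma statC_cons {x : ℕ} {ν : IntPartition} (hx : ν.parts 0 ≤ x) :
    (cons x ν hx).statC = ν.statA := by
  obtain ⟨B, hB⟩ := ν.fin_support
  rw [statC_eq _ (cons_bound hx hB), statA_eq _ (B := B + 1) (fun n hn => hB n (by omega))]
  rfl

lemma statD_cons {x : ℕ} {ν : IntPartition} (hx : ν.parts 0 ≤ x) :
    (cons x ν hx).statD = ν.statB := by
  obtain ⟨B, hB⟩ := ν.fin_support
  rw [statD_eq _ (cons_bound hx hB), statB_eq _ (B := B + 1) (fun n hn => hB n (by omega))]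
  rfl

lemma weight_cons {R : Type*} [CommRing R] (a b c d : R) {x : ℕ} {ν : IntPartition}
    (hx : ν.parts 0 ≤ x) :
    weight a b c d (cons x ν hx) = a ^ ((x + 1) / 2) * b ^ (x / 2) * weight c d a b ν := by
  unfold weight
  rw [statA_cons, statB_cons, statC_cons, statD_cons, pow_add, pow_add]
  ring

end IntPartition

namespace IntPartition

lemma strict_tail {μ : IntPartition} (h : μ.Strict) : (tail μ).Strict :=
  fun i hi => h (i + 1) hi

lemma cons_strict {x : ℕ} {ν : IntPartition} (hν : ν.Strict) (hlt : ν.parts 0 < x) :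
    (cons x ν hlt.le).Strict := by
  intro i hi
  cases i with
  | zero => exact hlt
  | succ m => exact hν m hi

def zeroP : IntPartition := ⟨fun _ => 0, fun _ _ _ => le_rfl, ⟨0, fun _ _ => rfl⟩⟩

def consTo (M : ℕ) :
    ({μ : IntPartition // μ.Strict ∧ μ.parts 0 ≤ M} ⊕ {μ : IntPartition // μ.Strict ∧ μ.parts 0 ≤ M})
      → {μ : IntPartition // μ.Strict ∧ μ.parts 0 ≤ M + 1} :=
  Sum.elim (fun ν => ⟨ν.1, ν.2.1, ν.2.2.trans (Nat.le_succ M)⟩)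
    (fun ν => ⟨cons (M + 1) ν.1 (Nat.lt_succ_of_le ν.2.2).le,
        cons_strict ν.2.1 (Nat.lt_succ_of_le ν.2.2), le_rfl⟩)

def consInv (M : ℕ) :
    {μ : IntPartition // μ.Strict ∧ μ.parts 0 ≤ M + 1}
      → ({μ : IntPartition // μ.Strict ∧ μ.parts 0 ≤ M} ⊕ {μ : IntPartition // μ.Strict ∧ μ.parts 0 ≤ M}) :=
  fun μ =>
    if hle : μ.1.parts 0 ≤ M then .inl ⟨μ.1, μ.2.1, hle⟩
    else .inr ⟨tail μ.1, strict_tail μ.2.1, by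
      show μ.1.parts 1 ≤ M
      by_cases h1 : μ.1.parts 1 = 0
      · omega
      · have h2 : μ.1.parts (0 + 1) < μ.1.parts 0 := μ.2.1 0 (by simpa using h1)
        have h3 := μ.2.2
        simp only [Nat.zero_add] at h2
        omega⟩

def consE (M : ℕ) :
    ({μ : IntPartition // μ.Strict ∧ μ.parts 0 ≤ M} ⊕ {μ : IntPartition // μ.Strict ∧ μ.parts 0 ≤ M})
      ≃ {μ : IntPartition // μ.Strict ∧ μ.parts 0 ≤ M + 1} where
  toFun := consTo M
  invFun := consInv M
  left_inv s := by
    rcases s with ν | ν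
    · simp only [consTo, consInv, Sum.elim_inl]
      exact dif_pos ν.2.2
    · simp only [consTo, consInv, Sum.elim_inr]
      refine (dif_neg (by show ¬ (M + 1 ≤ M); omega)).trans ?_
      exact congrArg Sum.inr (Subtype.ext (ext' rfl))
  right_inv μ := by
    unfold consInv
    by_cases hle : μ.1.parts 0 ≤ M
    · rw [dif_pos hle]
      exact Subtype.ext rfl
    · rw [dif_neg hle]
      show consTo M _ = μ
      unfold consTo
      apply Subtype.ext
      apply ext'
      funext n
      cases n with
      | zero =>
        show M + 1 = μ.1.parts 0
        have := μ.2.2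
        omega
      | succ m => rfl

lemma finiteS : ∀ M : ℕ, Finite {μ : IntPartition // μ.Strict ∧ μ.parts 0 ≤ M} := by
  intro M
  induction M with
  | zero =>
    have hsub : Subsingleton {μ : IntPartition // μ.Strict ∧ μ.parts 0 ≤ 0} := by
      constructor
      rintro ⟨μ, hμs, hμ⟩ ⟨ν, hνs, hν⟩
      apply Subtype.ext
      show μ = ν
      apply ext'
      funext n
      have h1 : μ.parts n ≤ μ.parts 0 := μ.antitone (Nat.zero_le n)
      have h2 : ν.parts n ≤ ν.parts 0 := ν.antitone (Nat.zero_le n)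
      omega
    exact Finite.of_subsingleton
  | succ M ih =>
    exact Finite.of_equiv _ (consE M)

lemma psi_zero {R : Type*} [CommRing R] (a b c d z : R) : Psi a b c d z 0 = 1 := by
  haveI huniq : Unique {μ : IntPartition // μ.Strict ∧ μ.parts 0 ≤ 0} := by
    refine ⟨⟨⟨zeroP, fun i hi => absurd rfl hi, le_rfl⟩⟩, ?_⟩
    rintro ⟨μ, hμs, hμ⟩
    apply Subtype.ext
    show μ = zeroP
    apply ext'
    funext n
    have h1 : μ.parts n ≤ μ.parts 0 := μ.antitone (Nat.zero_le n)
    show μ.parts n = 0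
    omega
  unfold Psi
  rw [finsum_unique]
  set μ := (default : {μ : IntPartition // μ.Strict ∧ μ.parts 0 ≤ 0}) with hμdef
  have hz : ∀ n, μ.1.parts n = 0 := by
    intro n
    have h1 : μ.1.parts n ≤ μ.1.parts 0 := μ.1.antitone (Nat.zero_le n)
    have h2 := μ.2.2
    omega
  have hA : μ.1.statA = 0 := by
    unfold statA
    rw [show (fun i : ℕ => (μ.1.parts (2 * i) + 1) / 2) = fun _ => 0 from
      funext fun i => by rw [hz (2 * i)], finsum_zero]
  have hB : μ.1.statB = 0 := by
    unfold statB
    rw [show (fun i : ℕ => μ.1.parts (2 * i) / 2) = fun _ => 0 from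
      funext fun i => by rw [hz (2 * i)], finsum_zero]
  have hCs : μ.1.statC = 0 := by
    unfold statC
    rw [show (fun i : ℕ => (μ.1.parts (2 * i + 1) + 1) / 2) = fun _ => 0 from
      funext fun i => by rw [hz (2 * i + 1)], finsum_zero]
  have hD : μ.1.statD = 0 := by
    unfold statD
    rw [show (fun i : ℕ => μ.1.parts (2 * i + 1) / 2) = fun _ => 0 from
      funext fun i => by rw [hz (2 * i + 1)], finsum_zero]
  have hL : μ.1.length = 0 := by
    unfold length
    have : Function.support μ.1.parts = ∅ := by
      ext n; simp [hz n]
    rw [this, Set.ncard_empty]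
  unfold weight
  rw [hA, hB, hCs, hD, hL]
  simp

lemma psi_succ {R : Type*} [CommRing R] (a b c d : R) (M : ℕ) :
    Psi a b c d 1 (M + 1) =
      Psi a b c d 1 M + a ^ ((M + 2) / 2) * b ^ ((M + 1) / 2) * Psi c d a b 1 M := by
  classical
  haveI : Finite {μ : IntPartition // μ.Strict ∧ μ.parts 0 ≤ M} := finiteS M
  haveI : Finite {μ : IntPartition // μ.Strict ∧ μ.parts 0 ≤ M + 1} := finiteS (M + 1)
  haveI := Fintype.ofFinite {μ : IntPartition // μ.Strict ∧ μ.parts 0 ≤ M}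
  haveI := Fintype.ofFinite {μ : IntPartition // μ.Strict ∧ μ.parts 0 ≤ M + 1}
  unfold Psi
  rw [finsum_eq_sum_of_fintype, finsum_eq_sum_of_fintype, finsum_eq_sum_of_fintype]
  rw [← Equiv.sum_comp (consE M)
    (fun μ : {μ : IntPartition // μ.Strict ∧ μ.parts 0 ≤ M + 1} =>
      weight a b c d μ.1 * (1 : R) ^ μ.1.length)]
  rw [Fintype.sum_sum_type]
  simp only [one_pow, mul_one]
  have h2 : ∑ ν : {μ : IntPartition // μ.Strict ∧ μ.parts 0 ≤ M},
      weight a b c d ((consE M) (Sum.inr ν)).1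
      = a ^ ((M + 2) / 2) * b ^ ((M + 1) / 2) *
        ∑ ν : {μ : IntPartition // μ.Strict ∧ μ.parts 0 ≤ M}, weight c d a b ν.1 := by
    rw [Finset.mul_sum]
    apply Finset.sum_congr rfl
    intro ν _
    have hinr : ((consE M) (Sum.inr ν)).1
        = cons (M + 1) ν.1 (Nat.lt_succ_of_le ν.2.2).le := rfl
    rw [hinr, weight_cons]
  rw [h2]
  rfl

end IntPartition

section AlgAux

variable {K : Type*} [Field K]

lemma poch_zero (x q : K) : poch x q 0 = 1 := rfl

lemma poch_succ (x q : K) (n : ℕ) : poch x q (n + 1) = poch x q n * (1 - x * q ^ n) :=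
  Finset.prod_range_succ _ _

lemma pochq_ne_zero {q : K} {N : ℕ} (h : ∀ j, 1 ≤ j → j ≤ N → (1 : K) - q ^ j ≠ 0)
    {n : ℕ} (hn : n ≤ N) : poch q q n ≠ 0 := by
  induction n with
  | zero => simp [poch]
  | succ m ih =>
    rw [poch_succ]
    refine mul_ne_zero (ih (by omega)) ?_
    have := h (m + 1) (by omega) hn
    rwa [pow_succ'] at this

lemma gauss_zero {q : K} {N : ℕ} (hN : poch q q N ≠ 0) : gauss q N 0 = 1 := by
  unfold gauss
  rw [Nat.sub_zero, poch_zero, one_mul, div_self hN]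

lemma gauss_NN {q : K} {N : ℕ} (hN : poch q q N ≠ 0) : gauss q N N = 1 := by
  unfold gauss
  rw [Nat.sub_self, poch_zero, mul_one, div_self hN]

lemma gauss_symm {q : K} {N k : ℕ} (hk : k ≤ N) : gauss q N (N - k) = gauss q N k := by
  unfold gauss
  rw [Nat.sub_sub_self hk, mul_comm]

lemma gauss_succ_mul {q : K} {N k : ℕ} (hk : k < N)
    (h : ∀ j, 1 ≤ j → j ≤ N → (1 : K) - q ^ j ≠ 0) :
    gauss q N (k + 1) * (1 - q ^ (k + 1)) = gauss q N k * (1 - q ^ (N - k)) := by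
  obtain ⟨m, hm⟩ : ∃ m, N - k = m + 1 := ⟨N - k - 1, by omega⟩
  unfold gauss
  rw [hm, show N - (k + 1) = m by omega, poch_succ q q k, poch_succ q q m]
  have h1 : (1 : K) - q * q ^ k ≠ 0 := by
    have := h (k + 1) (by omega) (by omega)
    rwa [pow_succ'] at this
  have h2 : (1 : K) - q * q ^ m ≠ 0 := by
    have := h (m + 1) (by omega) (by omega)
    rwa [pow_succ'] at this
  have h3 : poch q q k ≠ 0 := pochq_ne_zero h (by omega)
  have h4 : poch q q m ≠ 0 := pochq_ne_zero h (by omega)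
  field_simp
  ring

lemma gauss_pascal {q : K} {N k : ℕ} (hk1 : 1 ≤ k) (hk2 : k ≤ N)
    (h : ∀ j, 1 ≤ j → j ≤ N + 1 → (1 : K) - q ^ j ≠ 0) :
    gauss q (N + 1) k = q ^ k * gauss q N k + gauss q N (k - 1) := by
  obtain ⟨j, rfl⟩ : ∃ j, k = j + 1 := ⟨k - 1, by omega⟩
  obtain ⟨m, hm⟩ : ∃ m, N = j + m + 1 := ⟨N - j - 1, by omega⟩
  subst hm
  unfold gauss
  rw [show j + m + 1 + 1 - (j + 1) = m + 1 by omega,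
    show j + m + 1 - (j + 1) = m by omega,
    show j + 1 - 1 = j by omega,
    show j + m + 1 - j = m + 1 by omega,
    poch_succ q q (j + m + 1), poch_succ q q j, poch_succ q q m]
  have h1 : (1 : K) - q * q ^ j ≠ 0 := by
    have := h (j + 1) (by omega) (by omega)
    rwa [pow_succ'] at this
  have h2 : (1 : K) - q * q ^ m ≠ 0 := by
    have := h (m + 1) (by omega) (by omega)
    rwa [pow_succ'] at this
  have h3 : poch q q j ≠ 0 := pochq_ne_zero h (by omega)
  have h4 : poch q q m ≠ 0 := pochq_ne_zero h (by omega)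
  field_simp
  ring

noncomputable def Fs (a b c d q : K) (N : ℕ) : K :=
  ∑ k ∈ Finset.range (N + 1),
    gauss q N k * poch (-a) q (k + 1) * poch (-c) q (N - k) * (a * b) ^ (N - k)

noncomputable def tele (a b c d q : K) (N k : ℕ) : K :=
  if k ≤ N then
    gauss q N k * poch (-a) q k * poch (-c) q (N - k) * (a * b) ^ (N - k)
      * (a ^ 2 * b * (1 - q ^ k) * (c * q ^ N + q ^ k))
  else 0

lemma Fs_rec (a b c d q : K) (N : ℕ) (hq : q = a * b * c * d)
    (h : ∀ j, 1 ≤ j → j ≤ N + 1 → (1 : K) - q ^ j ≠ 0) :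
    Fs a b c d q (N + 1) =
      (1 + a * q ^ (N + 1)) * Fs a b c d q N
        + (1 + a) * (a * b) ^ (N + 1) * Fs c d a b q N := by
  subst hq
  set q : K := a * b * c * d with hq
  have hPsN : poch q q N ≠ 0 := pochq_ne_zero (fun j h1 h2 => h j h1 (by omega)) (le_refl N)
  have hPsN1 : poch q q (N + 1) ≠ 0 := pochq_ne_zero h (le_refl (N + 1))
  -- Step 1 : Pascal expansion
  have step1 : Fs a b c d q (N + 1) = ∑ k ∈ Finset.range (N + 1),
      (q ^ k * (1 - (-c) * q ^ (N - k)) * (a * b) + (1 - (-a) * q ^ (k + 1)))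
        * (gauss q N k * poch (-a) q (k + 1) * poch (-c) q (N - k) * (a * b) ^ (N - k)) := by
    unfold Fs
    have key : ∀ k ∈ Finset.range (N + 2),
        gauss q (N + 1) k * poch (-a) q (k + 1) * poch (-c) q (N + 1 - k) * (a * b) ^ (N + 1 - k)
        = (if k ≤ N then
            q ^ k * gauss q N k * poch (-a) q (k + 1) * poch (-c) q (N + 1 - k) * (a * b) ^ (N + 1 - k)
           else 0)
          + (if 1 ≤ k then
            gauss q N (k - 1) * poch (-a) q (k + 1) * poch (-c) q (N + 1 - k) * (a * b) ^ (N + 1 - k)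
           else 0) := by
      intro k hk
      rw [Finset.mem_range] at hk
      rcases Nat.eq_zero_or_pos k with rfl | hk0
      · rw [if_pos (Nat.zero_le N), if_neg (by omega)]
        rw [gauss_zero hPsN1, gauss_zero hPsN]
        ring
      rcases Nat.lt_or_ge k (N + 1) with hkN | hkN
      · rw [if_pos (by omega : k ≤ N), if_pos (show 1 ≤ k by omega), gauss_pascal (show 1 ≤ k by omega) (by omega) h]
        ring
      · have hkeq : k = N + 1 := by omega
        subst hkeq
        rw [if_neg (by omega), if_pos (by omega)]
        rw [gauss_NN hPsN1, show N + 1 - 1 = N by omega, gauss_NN hPsN]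
        ring
    rw [Finset.sum_congr rfl key, Finset.sum_add_distrib]
    have s1 : ∑ k ∈ Finset.range (N + 2), (if k ≤ N then
        q ^ k * gauss q N k * poch (-a) q (k + 1) * poch (-c) q (N + 1 - k) * (a * b) ^ (N + 1 - k)
        else 0)
        = ∑ k ∈ Finset.range (N + 1),
          q ^ k * gauss q N k * poch (-a) q (k + 1) * poch (-c) q (N + 1 - k) * (a * b) ^ (N + 1 - k) := by
      rw [Finset.sum_range_succ, if_neg (by omega), add_zero]
      exact Finset.sum_congr rfl (fun k hk => if_pos (by rw [Finset.mem_range] at hk; omega))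
    have s2 : ∑ k ∈ Finset.range (N + 2), (if 1 ≤ k then
        gauss q N (k - 1) * poch (-a) q (k + 1) * poch (-c) q (N + 1 - k) * (a * b) ^ (N + 1 - k)
        else 0)
        = ∑ k ∈ Finset.range (N + 1),
          gauss q N k * poch (-a) q (k + 1 + 1) * poch (-c) q (N - k) * (a * b) ^ (N - k) := by
      rw [Finset.sum_range_succ']
      rw [if_neg (by omega), add_zero]
      apply Finset.sum_congr rfl
      intro k hk
      rw [if_pos (by omega), show k + 1 - 1 = k by omega, show N + 1 - (k + 1) = N - k by omega]
    rw [s1, s2, ← Finset.sum_add_distrib]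
    apply Finset.sum_congr rfl
    intro k hk
    rw [Finset.mem_range] at hk
    rw [show N + 1 - k = (N - k) + 1 by omega, poch_succ (-c) q (N - k),
        poch_succ (-a) q (k + 1), pow_succ (a * b) (N - k)]
    ring
  -- Step 2 : reversal of the swapped sum
  have step2 : Fs c d a b q N = ∑ k ∈ Finset.range (N + 1),
      gauss q N k * poch (-a) q k * poch (-c) q ((N - k) + 1) * (c * d) ^ k := by
    unfold Fs
    rw [← Finset.sum_range_reflect]
    apply Finset.sum_congr rfl
    intro k hk
    rw [Finset.mem_range] at hk
    rw [show N + 1 - 1 - k = N - k by omega, gauss_symm (by omega),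
        show N - (N - k) = k by omega, show N - k + 1 = (N - k) + 1 from rfl]
    ring
  rw [step1, step2]
  unfold Fs
  rw [Finset.mul_sum, Finset.mul_sum, ← Finset.sum_add_distrib, ← sub_eq_zero,
      ← Finset.sum_sub_distrib]
  have step4 : ∀ k ∈ Finset.range (N + 1),
      (q ^ k * (1 - (-c) * q ^ (N - k)) * (a * b) + (1 - (-a) * q ^ (k + 1)))
          * (gauss q N k * poch (-a) q (k + 1) * poch (-c) q (N - k) * (a * b) ^ (N - k))
        - ((1 + a * q ^ (N + 1))
              * (gauss q N k * poch (-a) q (k + 1) * poch (-c) q (N - k) * (a * b) ^ (N - k))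
            + (1 + a) * (a * b) ^ (N + 1)
              * (gauss q N k * poch (-a) q k * poch (-c) q ((N - k) + 1) * (c * d) ^ k))
      = tele a b c d q N (k + 1) - tele a b c d q N k := by
    intro k hk
    rw [Finset.mem_range] at hk
    unfold tele
    rcases Nat.lt_or_ge k N with hkN | hkN
    · -- middle case, telescoping step
      obtain ⟨m, hm⟩ : ∃ m, N = k + m + 1 := ⟨N - k - 1, by omega⟩
      rw [if_pos (by omega), if_pos (by omega)]
      have hgauss := gauss_succ_mul hkN (fun j h1 h2 => h j h1 (by omega))
      rw [show N - k = m + 1 by omega] at hgauss ⊢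
      rw [show N - (k + 1) = m by omega]
      rw [poch_succ (-a) q k, poch_succ (-c) q (m + 1), poch_succ (-c) q m,
          pow_succ (a * b) m]
      rw [show q ^ N = q ^ k * q ^ (m + 1) by
        rw [show N = k + (m + 1) by omega, pow_add]]
      rw [show q ^ (N + 1) = q ^ k * q ^ (m + 1) * q by
        rw [show N + 1 = k + (m + 1) + 1 by omega, pow_add, pow_add, pow_one]]
      rw [show (a * b) ^ (N + 1) = (a * b) ^ m * (a * b) ^ (k + 1) * (a * b) by
        rw [show N + 1 = m + (k + 1) + 1 by omega, pow_add, pow_add, pow_one]]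
      have hcd : (a * b) ^ (k + 1) * (c * d) ^ k = (a * b) * q ^ k := by
        rw [hq]; ring
      linear_combination
        (-(poch (-a) q k * (1 - -a * q ^ k) * poch (-c) q m * (a * b) ^ m
          * (a ^ 2 * b * (c * (q ^ k * q ^ (m + 1)) + q ^ (k + 1))))) * hgauss
        + (-((1 + a) * (a * b) ^ m * (a * b) * (gauss q N k * poch (-a) q k
          * (poch (-c) q m * (1 - -c * q ^ m) * (1 - -c * q ^ (m + 1)))))) * hcd
    · -- last term k = N
      have hkeq : k = N := by omega
      rw [hkeq]
      rw [if_neg (by omega), if_pos (le_refl N)]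
      rw [Nat.sub_self]
      rw [poch_succ (-a) q N, poch_succ (-c) q 0, poch_zero, pow_zero]
      have hcdN : (a * b) ^ (N + 1) * (c * d) ^ N = (a * b) * q ^ N := by
        rw [hq]; ring
      linear_combination
        (-((1 + a) * (gauss q N N * poch (-a) q N * (1 * (1 - -c * 1))))) * hcdN
  rw [Finset.sum_congr rfl step4, Finset.sum_range_sub (tele a b c d q N) (N + 1)]
  unfold tele
  rw [if_neg (by omega), if_pos (Nat.zero_le N), pow_zero]
  ring

end AlgAux


theorem psi_odd_gauss {K : Type*} [Field K] (a b c d q : K) (N : ℕ)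
    (hq : q = a * b * c * d) (h : ∀ j, 1 ≤ j → j ≤ N → (1 : K) - q ^ j ≠ 0) :
    Psi a b c d 1 (2 * N + 1) =
      ∑ k ∈ Finset.range (N + 1),
        gauss q N k * poch (-a) q (k + 1) * poch (-c) q (N - k) * (a * b) ^ (N - k) := by
  have main : ∀ (M : ℕ) (a b c d : K), q = a * b * c * d →
      (∀ j, 1 ≤ j → j ≤ M → (1 : K) - q ^ j ≠ 0) →
      Psi a b c d 1 (2 * M + 1) = Fs a b c d q M := by
    intro M
    induction M with
    | zero =>
      intro a b c d hq h
      rw [show 2 * 0 + 1 = 0 + 1 by norm_num, IntPartition.psi_succ, IntPartition.psi_zero,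
        IntPartition.psi_zero]
      rw [show ((0 : ℕ) + 2) / 2 = 1 by norm_num, show ((0 : ℕ) + 1) / 2 = 0 by norm_num]
      unfold Fs
      rw [Finset.sum_range_one]
      simp [gauss, poch]
    | succ n ih =>
      intro a b c d hq h
      have s1 := IntPartition.psi_succ a b c d (2 * n + 2)
      have s2 := IntPartition.psi_succ a b c d (2 * n + 1)
      have s3 := IntPartition.psi_succ c d a b (2 * n + 1)
      rw [show 2 * n + 1 + 1 = 2 * n + 2 by omega] at s2 s3
      rw [show (2 * n + 2 + 2) / 2 = n + 2 by omega,
          show (2 * n + 2 + 1) / 2 = n + 1 by omega] at s1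
      rw [show (2 * n + 1 + 2) / 2 = n + 1 by omega,
          show (2 * n + 2) / 2 = n + 1 by omega] at s2 s3
      have hrec := Fs_rec a b c d q n hq h
      have ih1 := ih a b c d hq (fun j hj1 hj2 => h j hj1 (by omega))
      have ih2 := ih c d a b (by rw [hq]; ring) (fun j hj1 hj2 => h j hj1 (by omega))
      rw [show 2 * (n + 1) + 1 = 2 * n + 2 + 1 by omega, s1, s2, s3, ih1, ih2, hrec]
      rw [hq]
      ring
  have := main N a b c d hq h
  unfold Fs at this
  exact this
end
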